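/- Suppose y is a function on a domain D ⊆ ℂ satisfying the quasi-automorphy property y(γ(z)) = (cz+d)²y(z) + pc(cz+d) for all γ = [[a,b],[c,d]] in a subgroup Γ of SL₂(ℝ) acting on D, where p ≠ 0 is a constant. Then f₂ := y' − y²/p satisfies f₂(γ(z)) = (cz+d)⁴f₂(z) for all γ ∈ Γ, i.e. f₂ is an automorphic form of weight 4. -/

import Mathlib

/-- If `y` is quasi-automorphic of weight 2 with affinity coefficient `p ≠ 0`
under a Möbius transformation `z ↦ (az+b)/(cz+d)` (real `a,b,c,d`, `ad−bc = 1`)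
preserving a domain `D`, then `f₂ := y' − y²/p` is automorphic of weight 4:
`f₂(γ(z)) = (cz+d)⁴ f₂(z)`. -/
theorem weight_four_form (D : Set ℂ) (hD : IsOpen D) (y : ℂ → ℂ)
    (hy : DifferentiableOn ℂ y D) (p : ℂ) (hp : p ≠ 0)
    (a b c d : ℝ) (hdet : a * d - b * c = 1)
    (hmap : ∀ z ∈ D, ((a : ℂ) * z + b) / ((c : ℂ) * z + d) ∈ D)
    (hcd : ∀ z ∈ D, (c : ℂ) * z + d ≠ 0)
    (hqa : ∀ z ∈ D,
      y (((a : ℂ) * z + b) / ((c : ℂ) * z + d)) =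
        ((c : ℂ) * z + d) ^ 2 * y z + p * c * ((c : ℂ) * z + d)) :
    ∀ z ∈ D,
      deriv y (((a : ℂ) * z + b) / ((c : ℂ) * z + d))
          - (y (((a : ℂ) * z + b) / ((c : ℂ) * z + d))) ^ 2 / p
        = ((c : ℂ) * z + d) ^ 4 * (deriv y z - (y z) ^ 2 / p) := by
  intro z hz
  have hq0 : (c : ℂ) * z + d ≠ 0 := hcd z hz
  have hgz : ((a : ℂ) * z + b) / ((c : ℂ) * z + d) ∈ D := hmap z hz
  have hyz : HasDerivAt y (deriv y z) z :=
    ((hy z hz).differentiableAt (hD.mem_nhds hz)).hasDerivAt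
  have hyw : HasDerivAt y (deriv y (((a : ℂ) * z + b) / ((c : ℂ) * z + d)))
      (((a : ℂ) * z + b) / ((c : ℂ) * z + d)) :=
    ((hy _ hgz).differentiableAt (hD.mem_nhds hgz)).hasDerivAt
  have hdetC : (a : ℂ) * d - b * c = 1 := by exact_mod_cast hdet
  have h1 : HasDerivAt (fun w : ℂ => (a : ℂ) * w + b) a z := by
    simpa using ((hasDerivAt_id z).const_mul (a : ℂ)).add_const (b : ℂ)
  have h2 : HasDerivAt (fun w : ℂ => (c : ℂ) * w + d) c z := by
    simpa using ((hasDerivAt_id z).const_mul (c : ℂ)).add_const (d : ℂ)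
  have hg : HasDerivAt (fun w : ℂ => ((a : ℂ) * w + b) / ((c : ℂ) * w + d))
      (1 / (((c : ℂ) * z + d) ^ 2)) z := by
    have hnum : (a : ℂ) * ((c : ℂ) * z + d) - ((a : ℂ) * z + b) * c = 1 := by
      linear_combination hdetC
    have := h1.div h2 hq0
    rwa [hnum] at this
  have hcomp : HasDerivAt (fun w : ℂ => y (((a : ℂ) * w + b) / ((c : ℂ) * w + d)))
      (deriv y (((a : ℂ) * z + b) / ((c : ℂ) * z + d)) * (1 / (((c : ℂ) * z + d) ^ 2))) z :=
    hyw.comp z hg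
  have hF : HasDerivAt (fun w : ℂ => ((c : ℂ) * w + d) ^ 2 * y w + p * c * ((c : ℂ) * w + d))
      ((2 * ((c : ℂ) * z + d) * c) * y z + ((c : ℂ) * z + d) ^ 2 * deriv y z + p * c * c) z := by
    have hmul := ((h2.pow 2).mul hyz)
    have hadd := hmul.add ((h2.const_mul (p * (c : ℂ))))
    refine hadd.congr_deriv ?_
    simp only [Pi.pow_apply]
    ring
  have heq : (fun w : ℂ => y (((a : ℂ) * w + b) / ((c : ℂ) * w + d)))
      =ᶠ[nhds z] (fun w : ℂ => ((c : ℂ) * w + d) ^ 2 * y w + p * c * ((c : ℂ) * w + d)) := by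
    filter_upwards [hD.mem_nhds hz] with w hw using hqa w hw
  have hcomp' : HasDerivAt (fun w : ℂ => ((c : ℂ) * w + d) ^ 2 * y w + p * c * ((c : ℂ) * w + d))
      (deriv y (((a : ℂ) * z + b) / ((c : ℂ) * z + d)) * (1 / (((c : ℂ) * z + d) ^ 2))) z :=
    (heq.hasDerivAt_iff).mp hcomp
  have huniq := hcomp'.unique hF
  rw [hqa z hz]
  field_simp
  field_simp at huniq
  rw [div_eq_iff (pow_ne_zero 2 (by rwa [mul_comm] at hq0))] at huniq
  linear_combination p * huniq
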